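/- arXiv:1902.11263 — 2 statements merged into one kernel-verified Lean document; each statement's English description precedes it below -/
import Mathlib

section
/- Let u1, w1, y1, u2, w2, y2 be words over B and v1, x1, v2, x2 nonempty words with |v1| + |x1| = |v2| + |x2|, |v1| ≠ |v2| and |x1| ≠ |x2|, such that u1·v1^i·w1·x1^i·y1 = u2·v2^i·w2·x2^i·y2 for all i ∈ ℕ. Then there exist a nonempty word x and contexts f1, f2 such that for every i ≥ 1 there exists k ∈ ℕ with v1^i·w1·x1^i = f1[x^k] and v2^i·w2·x2^i = f2[x^k]. -/
/-- `wpow x n` is the word `x` repeated `n` times (`x^n`). -/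
def wpow {B : Type*} (x : List B) : ℕ → List B
  | 0 => []
  | n + 1 => x ++ wpow x n

/-- Length of a longest common factor (infix) of `u` and `v`. -/
noncomputable def lcfLen {B : Type*} (u v : List B) : ℕ :=
  sSup {n | ∃ w : List B, w.length = n ∧ w <:+: u ∧ w <:+: v}

/-- The factor distance `dist_f(u,v) = |u| + |v| - 2·|lcf(u,v)|`. -/
noncomputable def distf {B : Type*} (u v : List B) : ℕ :=
  u.length + v.length - 2 * lcfLen u v

/-- A context is a pair of words; `capp c w = c.1 ++ w ++ c.2` is `c[w]`. -/
def capp {B : Type*} (c : List B × List B) (w : List B) : List B :=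
  c.1 ++ w ++ c.2

/-- The length `|c|` of a context. -/
def clen {B : Type*} (c : List B × List B) : ℕ :=
  c.1.length + c.2.length

/-- Product of contexts: `(c·d)[w] = c[d[w]]`. -/
def cmul {B : Type*} (c d : List B × List B) : List B × List B :=
  (c.1 ++ d.1, d.2 ++ c.2)

/-- Power of a context: `c^n[w] = l^n ++ w ++ r^n`. -/
def cpow {B : Type*} (c : List B × List B) (n : ℕ) : List B × List B :=
  (wpow c.1 n, wpow c.2 n)

/-- A nonempty word `x` is primitive if `x = y^p` with `p ≥ 1` implies `p = 1`. -/
def Primitive {B : Type*} (x : List B) : Prop :=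
  x ≠ [] ∧ ∀ (y : List B) (p : ℕ), 1 ≤ p → x = wpow y p → p = 1

/-- Words `x` and `y` are conjugate. -/
def Conj {B : Type*} (x y : List B) : Prop :=
  ∃ t1 t2 : List B, x = t1 ++ t2 ∧ y = t2 ++ t1

/-- The triple of contexts `(c, d, e)` is `x`-commuting: there is a context `f`
such that for every `i ≥ 1` there is `k` with `(e^i·d·c)[ε] = f[x^k]`. -/
def XCommuting {B : Type*} (c d e : List B × List B) (x : List B) : Prop :=
  ∃ f : List B × List B, ∀ i : ℕ, 1 ≤ i → ∃ k : ℕ,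
    capp (cmul (cpow e i) (cmul d c)) [] = capp f (wpow x k)

namespace CombAux

variable {B : Type*}

def Per (f : ℕ → B) (p N : ℕ) : Prop := ∀ n, N ≤ n → f (n + p) = f n

theorem wpow_len (x : List B) : ∀ n, (wpow x n).length = n * x.length
  | 0 => by simp [wpow]
  | n + 1 => by simp [wpow, wpow_len x n]; ring


theorem wpow_add (x : List B) (m n : ℕ) : wpow x (m + n) = wpow x m ++ wpow x n := by
  induction m with
  | zero => simp [wpow]
  | succ k ih => rw [Nat.succ_add]; simp [wpow, ih]


theorem wpow_succ' (x : List B) (n : ℕ) : wpow x (n + 1) = wpow x n ++ x := by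
  rw [wpow_add]; simp [wpow]


theorem wpow_getD (d : B) (x : List B) :
    ∀ m n, n < m * x.length → (wpow x m).getD n d = x.getD (n % x.length) d := by
  intro m
  induction m with
  | zero => intro n hn; simp at hn
  | succ k ih =>
    intro n hn
    have hmul : (k + 1) * x.length = k * x.length + x.length := by ring
    show (x ++ wpow x k).getD n d = _
    rcases lt_or_ge n x.length with h | h
    · rw [List.getD_append _ _ _ _ h, Nat.mod_eq_of_lt h]
    · rw [List.getD_append_right _ _ _ _ h]
      rw [ih (n - x.length) (by omega)]
      congr 1
      conv_rhs => rw [show n = (n - x.length) + x.length by omega]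
      rw [Nat.add_mod_right]


theorem wpow_reverse (x : List B) : ∀ n, (wpow x n).reverse = wpow x.reverse n
  | 0 => by simp [wpow]
  | n + 1 => by
      rw [wpow_succ' x.reverse n]
      simp [wpow, wpow_reverse x n]


theorem wpow_rot (s t : List B) : ∀ m, wpow (s ++ t) (m + 1) = s ++ wpow (t ++ s) m ++ t
  | 0 => by simp [wpow]
  | m + 1 => by
      have := wpow_rot s t m
      show (s ++ t) ++ wpow (s ++ t) (m+1) = _
      rw [this]
      show s ++ t ++ (s ++ wpow (t ++ s) m ++ t) = s ++ ((t ++ s) ++ wpow (t ++ s) m) ++ t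
      simp [List.append_assoc]


theorem per_iter {f : ℕ → B} {p N : ℕ} (hf : Per f p N) :
    ∀ (k n), N ≤ n → f (n + k * p) = f n := by
  intro k
  induction k with
  | zero => simp
  | succ j ih =>
    intro n hn
    have : n + (j+1) * p = (n + j * p) + p := by ring
    rw [this, hf _ (by omega), ih n hn]


theorem per_mono {f : ℕ → B} {p N M : ℕ} (hf : Per f p N) (h : N ≤ M) : Per f p M :=
  fun n hn => hf n (by omega)


theorem per_eq {f : ℕ → B} {p N : ℕ} (hp : 1 ≤ p) (hf : Per f p N) :
    ∀ m n, N ≤ m → N ≤ n → m % p = n % p → f m = f n := by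
  have key : ∀ m n, m ≤ n → N ≤ m → N ≤ n → m % p = n % p → f m = f n := by
    intro m n hmn hm hn hmod
    have hd : p ∣ (n - m) := (Nat.modEq_iff_dvd' hmn).mp hmod
    obtain ⟨k, hk⟩ := hd
    have hpk : p * k = k * p := mul_comm _ _
    have : n = m + k * p := by omega
    rw [this, per_iter hf k m hm]
  intro m n hm hn hmod
  rcases le_total m n with h | h
  · exact key m n h hm hn hmod
  · exact (key n m h hn hm hmod.symm).symm


theorem nat_bezout (p q : ℕ) (hp : 1 ≤ p) (hq : 1 ≤ q) :
    ∃ s t : ℕ, p * s = Nat.gcd p q + q * t := by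
  have hb := Nat.gcd_eq_gcd_ab p q
  set P := Nat.gcdA p q with hPdef
  set Q := Nat.gcdB p q with hQdef
  set c : ℕ := P.natAbs + Q.natAbs + 1 with hcdef
  have hcP : (P.natAbs : ℤ) < (c : ℤ) := by
    have : P.natAbs < c := by omega
    exact_mod_cast this
  have hcQ : (Q.natAbs : ℤ) < (c : ℤ) := by
    have : Q.natAbs < c := by omega
    exact_mod_cast this
  have hP1 : -P ≤ (P.natAbs : ℤ) := by
    rw [← Int.abs_eq_natAbs]; exact neg_le_abs P
  have hQ1 : Q ≤ (Q.natAbs : ℤ) := Int.le_natAbs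
  have hq' : (1:ℤ) ≤ (q:ℤ) := by exact_mod_cast hq
  have hp' : (1:ℤ) ≤ (p:ℤ) := by exact_mod_cast hp
  have h1 : (0:ℤ) ≤ P + (c:ℤ) * q := by nlinarith
  have h2 : (0:ℤ) ≤ (c:ℤ) * p - Q := by nlinarith
  refine ⟨(P + (c:ℤ) * q).toNat, ((c:ℤ) * p - Q).toNat, ?_⟩
  have hfin : ((p:ℤ)) * ((P + (c:ℤ) * q).toNat : ℤ) =
      ((Nat.gcd p q : ℤ)) + (q:ℤ) * (((c:ℤ) * p - Q).toNat : ℤ) := by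
    rw [Int.toNat_of_nonneg h1, Int.toNat_of_nonneg h2, hb]; ring
  exact_mod_cast hfin


theorem per_gcd {f : ℕ → B} {p q N : ℕ} (hp : 1 ≤ p) (hq : 1 ≤ q)
    (hfp : Per f p N) (hfq : Per f q N) : Per f (Nat.gcd p q) N := by
  obtain ⟨s, t, hst⟩ := nat_bezout p q hp hq
  intro n hn
  have h1 : f (n + Nat.gcd p q + t * q) = f (n + Nat.gcd p q) :=
    per_iter hfq t (n + Nat.gcd p q) (by omega)
  have h2 : f (n + s * p) = f n := per_iter hfp s n hn
  have e1 : q * t = t * q := mul_comm _ _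
  have e2 : p * s = s * p := mul_comm _ _
  have : n + Nat.gcd p q + t * q = n + s * p := by omega
  rw [← h1, this, h2]


theorem per_boot {f : ℕ → B} {p g M N : ℕ} (hp : 1 ≤ p)
    (hfp : Per f p M) (hfg : Per f g N) (hdvd : g ∣ p) : Per f g M := by
  intro n hn
  have h1 : f (n + g + N * p) = f (n + g) := per_iter hfp N (n + g) (by omega)
  have h2 : f (n + N * p) = f n := per_iter hfp N n hn
  have hNp : N ≤ N * p := Nat.le_mul_of_pos_right N (by omega)
  have h3 : f (n + N * p + g) = f (n + N * p) := hfg (n + N * p) (by omega)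
  have e : n + g + N * p = n + N * p + g := by ring
  rw [e] at h1
  rw [← h2, ← h3, h1]


theorem getD_rev (l : List B) (d : B) {n : ℕ} (h : n < l.length) :
    l.getD n d = l.reverse.getD (l.length - 1 - n) d := by
  rw [List.getD_eq_getElem l d h,
      List.getD_eq_getElem l.reverse d (by simp; omega)]
  rw [List.getElem_reverse]
  congr 1
  omega


theorem getD_take (z : List B) (d : B) {m r : ℕ} (hm : m < r) (hz : m < z.length) :
    (z.take r).getD m d = z.getD m d := by
  rw [List.getD_eq_getElem _ d (by simp; omega), List.getD_eq_getElem _ d hz]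
  exact List.getElem_take


theorem period_mod (T : List B) (d : B) (G : ℕ) (hG : 1 ≤ G)
    (hper : ∀ n, n + G < T.length → T.getD (n + G) d = T.getD n d) :
    ∀ n, n < T.length → T.getD n d = T.getD (n % G) d := by
  intro n
  induction n using Nat.strong_induction_on with
  | _ n ih =>
    intro hn
    rcases lt_or_ge n G with h | h
    · rw [Nat.mod_eq_of_lt h]
    · have h1 : (n - G) + G = n := by omega
      have h2 : T.getD ((n - G) + G) d = T.getD (n - G) d := hper (n - G) (by omega)
      rw [h1] at h2
      rw [h2, ih (n - G) (by omega) (by omega)]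
      congr 1
      conv_rhs => rw [← h1]
      rw [Nat.add_mod_right]


theorem eq_pow_form (T z : List B) (d : B) (G : ℕ) (hG : 1 ≤ G) (hz : z.length = G)
    (hfit : ∀ n, n < T.length → T.getD n d = z.getD (n % G) d) :
    T = wpow z (T.length / G) ++ z.take (T.length % G) := by
  have hmod := Nat.div_add_mod T.length G
  have hc0 : G * (T.length / G) = T.length / G * G := mul_comm _ _
  have hmlt : T.length % G < G := Nat.mod_lt _ (by omega)
  have hlen : T.length = (wpow z (T.length / G) ++ z.take (T.length % G)).length := by
    rw [List.length_append, wpow_len, hz, List.length_take, hz,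
       min_eq_left (le_of_lt hmlt)]
    omega
  apply List.ext_getElem hlen
  intro n h1 h2
  rw [← List.getD_eq_getElem T d h1, ← List.getD_eq_getElem _ d h2, hfit n h1]
  symm
  rcases lt_or_ge n (T.length / G * G) with hc | hc
  · rw [List.getD_append _ _ _ _ (by rw [wpow_len, hz]; exact hc)]
    rw [wpow_getD d z _ n (by rw [hz]; exact hc), hz]
  · rw [List.getD_append_right _ _ _ _ (by rw [wpow_len, hz]; exact hc)]
    have hdiv : n / G = T.length / G := by
      have hub : n / G ≤ T.length / G := Nat.div_le_div_right (le_of_lt h1)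
      have hlb : T.length / G ≤ n / G := (Nat.le_div_iff_mul_le (by omega)).mpr hc
      omega
    have hnm := Nat.div_add_mod n G
    have hidx : n - (wpow z (T.length / G)).length = n % G := by
      rw [wpow_len, hz, ← hdiv]
      have hcomm : G * (n / G) = n / G * G := mul_comm _ _
      omega
    rw [hidx]
    have heq : G * (n / G) = G * (T.length / G) := by rw [hdiv]
    have hcomm2 : G * (T.length / G) = T.length / G * G := mul_comm _ _
    have hfin1 : n % G < T.length % G := by omega
    have hfin2 : n % G < z.length := by
      have : n % G < G := Nat.mod_lt _ (by omega)
      omega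
    exact getD_take z d hfin1 hfin2


theorem getD_drop (l : List B) (d : B) {i j : ℕ} (h : i + j < l.length) :
    (l.drop i).getD j d = l.getD (i + j) d := by
  rw [List.getD_eq_getElem _ d (by simp; omega), List.getD_eq_getElem _ d h]
  exact List.getElem_drop

def Wf (d : B) (u v : List B) : ℕ → B := fun n =>
  if n < u.length then u.getD n d else v.getD ((n - u.length) % v.length) d

theorem agree (d : B) (u v rest : List B) :
    ∀ i n, n < u.length + i * v.length →
      (u ++ (wpow v i ++ rest)).getD n d = Wf d u v n := by
  intro i n hn
  unfold Wf
  rcases lt_or_ge n u.length with hlt | hge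
  · rw [List.getD_append _ _ _ _ hlt, if_pos hlt]
  · rw [List.getD_append_right _ _ _ _ hge, if_neg (not_lt.mpr hge)]
    have h2 : n - u.length < i * v.length := by omega
    rw [List.getD_append _ _ _ _ (by rw [wpow_len]; exact h2)]
    exact wpow_getD d v i (n - u.length) h2

theorem Wf_per (d : B) (u v : List B) : Per (Wf d u v) v.length u.length := by
  intro n hn
  unfold Wf
  rw [if_neg (by omega), if_neg (by omega)]
  congr 1
  have e : n + v.length - u.length = (n - u.length) + v.length := by omega
  rw [e, Nat.add_mod_right]

theorem key (u1 w1 y1 u2 w2 y2 v1 x1 v2 x2 : List B)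
    (hv1 : v1 ≠ []) (hx1 : x1 ≠ []) (hv2 : v2 ≠ []) (hx2 : x2 ≠ [])
    (hlen : v1.length + x1.length = v2.length + x2.length)
    (hba : v2.length < v1.length)
    (h : ∀ i : ℕ,
      u1 ++ wpow v1 i ++ w1 ++ wpow x1 i ++ y1 =
        u2 ++ wpow v2 i ++ w2 ++ wpow x2 i ++ y2) :
    ∃ x : List B, x ≠ [] ∧ ∃ f1 f2 : List B × List B,
      ∀ i : ℕ, 1 ≤ i → ∃ k : ℕ,
        wpow v1 i ++ w1 ++ wpow x1 i = capp f1 (wpow x k) ∧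
        wpow v2 i ++ w2 ++ wpow x2 i = capp f2 (wpow x k) := by
  have ha : 1 ≤ v1.length := List.length_pos_iff.mpr hv1
  have hb : 1 ≤ v2.length := List.length_pos_iff.mpr hv2
  have hm1 : 1 ≤ x1.length := List.length_pos_iff.mpr hx1
  have hm2 : 1 ≤ x2.length := List.length_pos_iff.mpr hx2
  have hm12 : x1.length < x2.length := by omega
  set d : B := v1.head hv1 with hd
  set S : ℕ → List B := fun i => u1 ++ (wpow v1 i ++ (w1 ++ (wpow x1 i ++ y1))) with hSdef
  have hS2 : ∀ i, S i = u2 ++ (wpow v2 i ++ (w2 ++ (wpow x2 i ++ y2))) := by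
    intro i
    have hh := h i
    simp only [List.append_assoc] at hh
    exact hh
  have hSlen : ∀ i, (S i).length =
      (u1.length + w1.length + y1.length) + i * (v1.length + x1.length) := by
    intro i
    have e1 : i * (v1.length + x1.length) = i * v1.length + i * x1.length :=
      Nat.mul_add i _ _
    simp [hSdef, wpow_len]
    omega
  have hK : u1.length + w1.length + y1.length = u2.length + w2.length + y2.length := by
    have hh := congrArg List.length (h 0)
    simp [wpow] at hh
    omega
  have hSrev1 : ∀ i, (S i).reverse =
      y1.reverse ++ (wpow x1.reverse i ++ (w1.reverse ++ (wpow v1.reverse i ++ u1.reverse))) := by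
    intro i
    simp [hSdef, wpow_reverse, List.reverse_append]
  have hSrev2 : ∀ i, (S i).reverse =
      y2.reverse ++ (wpow x2.reverse i ++ (w2.reverse ++ (wpow v2.reverse i ++ u2.reverse))) := by
    intro i
    rw [hS2 i]
    simp [wpow_reverse, List.reverse_append]
  -- agreements
  have agW : ∀ i n, n < u1.length + i * v1.length → (S i).getD n d = Wf d u1 v1 n :=
    fun i n hn => agree d u1 v1 _ i n hn
  have agW2 : ∀ i n, n < u2.length + i * v2.length → (S i).getD n d = Wf d u2 v2 n := by
    intro i n hn
    rw [hS2 i]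
    exact agree d u2 v2 _ i n hn
  have agV : ∀ i n, n < y2.length + i * x2.length →
      (S i).reverse.getD n d = Wf d y2.reverse x2.reverse n := by
    intro i n hn
    rw [hSrev2 i]
    exact agree d y2.reverse x2.reverse _ i n (by simpa using hn)
  have agV2 : ∀ i n, n < y1.length + i * x1.length →
      (S i).reverse.getD n d = Wf d y1.reverse x1.reverse n := by
    intro i n hn
    rw [hSrev1 i]
    exact agree d y1.reverse x1.reverse _ i n (by simpa using hn)
  -- pointwise equality of the two descriptions
  have hWW : ∀ n, Wf d u1 v1 n = Wf d u2 v2 n := by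
    intro n
    have b1 : n < u1.length + (n+1) * v1.length := by
      have := Nat.le_mul_of_pos_right (n+1) (show 0 < v1.length by omega)
      omega
    have b2 : n < u2.length + (n+1) * v2.length := by
      have := Nat.le_mul_of_pos_right (n+1) (show 0 < v2.length by omega)
      omega
    exact (agW (n+1) n b1).symm.trans (agW2 (n+1) n b2)
  have hVV : ∀ n, Wf d y2.reverse x2.reverse n = Wf d y1.reverse x1.reverse n := by
    intro n
    have b1 : n < y2.length + (n+1) * x2.length := by
      have := Nat.le_mul_of_pos_right (n+1) (show 0 < x2.length by omega)
      omega
    have b2 : n < y1.length + (n+1) * x1.length := by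
      have := Nat.le_mul_of_pos_right (n+1) (show 0 < x1.length by omega)
      omega
    exact (agV (n+1) n b1).symm.trans (agV2 (n+1) n b2)
  -- basic periods
  have pWa : Per (Wf d u1 v1) v1.length u1.length := Wf_per d u1 v1
  have pWb : Per (Wf d u1 v1) v2.length u2.length := by
    intro n hn
    rw [hWW, hWW]
    exact Wf_per d u2 v2 n hn
  have pVm2 : Per (Wf d y2.reverse x2.reverse) x2.length y2.length := by
    have hh := Wf_per d y2.reverse x2.reverse
    rw [List.length_reverse, List.length_reverse] at hh
    exact hh
  have pVm1 : Per (Wf d y2.reverse x2.reverse) x1.length y1.length := by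
    intro n hn
    rw [hVV, hVV]
    have hh := Wf_per d y1.reverse x1.reverse
    rw [List.length_reverse, List.length_reverse] at hh
    exact hh n hn
  have grev : ∀ i q, q < (S i).length →
      (S i).getD q d = (S i).reverse.getD ((S i).length - 1 - q) d :=
    fun i q hq => getD_rev _ d hq
  -- Transfer: W has period x1.length far out
  have pWm1 : ∃ N0, Per (Wf d u1 v1) x1.length N0 := by
    set K := u1.length + w1.length + y1.length with hKdef
    set C := K + (x1.length + 1) * v2.length + 1 with hCdef
    refine ⟨C * v1.length + v1.length + x1.length + 1, ?_⟩
    intro n hn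
    set i := n / v1.length + (x1.length + 1) with hidef
    have hdm := Nat.div_add_mod n v1.length
    have hmlt := Nat.mod_lt n (show 0 < v1.length by omega)
    have hia : i * v1.length
        = (n / v1.length) * v1.length + (x1.length + 1) * v1.length := Nat.add_mul _ _ _
    have hcm : v1.length * (n / v1.length) = (n / v1.length) * v1.length := mul_comm _ _
    have hx1a : x1.length + 1 ≤ (x1.length + 1) * v1.length :=
      Nat.le_mul_of_pos_right _ (by omega)
    have hx1b : x1.length + v1.length ≤ (x1.length + 1) * v1.length := by nlinarith
    have c1 : n + x1.length + 1 ≤ u1.length + i * v1.length := by omega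
    have hdiv2 : C ≤ n / v1.length := by
      rw [Nat.le_div_iff_mul_le (show 0 < v1.length by omega)]
      omega
    have hib : i * v2.length
        = (n / v1.length) * v2.length + (x1.length + 1) * v2.length := Nat.add_mul _ _ _
    have hmono : (n / v1.length) * (v2.length + 1) ≤ (n / v1.length) * v1.length :=
      Nat.mul_le_mul_left _ (by omega)
    have hexp : (n / v1.length) * (v2.length + 1)
        = (n / v1.length) * v2.length + (n / v1.length) := by ring
    have c2 : K + i * v2.length + 1 ≤ n + y2.length := by omega
    have hiP : i * (v1.length + x1.length) = i * v1.length + i * x1.length :=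
      Nat.mul_add i _ _
    have hiP2 : i * (v1.length + x1.length) = i * v2.length + i * x2.length := by
      rw [hlen]; exact Nat.mul_add i _ _
    have hLi := hSlen i
    have hmono2 : i * v1.length ≤ i * (v1.length + x1.length) :=
      Nat.mul_le_mul_left _ (by omega)
    have hq1 : n < u1.length + i * v1.length := by omega
    have hq2 : n + x1.length < u1.length + i * v1.length := by omega
    have hs1 := agW i n hq1
    have hs2 := agW i (n + x1.length) hq2
    have hqLi : n + x1.length < (S i).length := by omega
    have hr1 := grev i n (by omega)
    have hr2 := grev i (n + x1.length) hqLi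
    have hrev1 : (S i).length - 1 - n < y2.length + i * x2.length := by omega
    have hrev2 : (S i).length - 1 - (n + x1.length) < y2.length + i * x2.length := by omega
    have ha1 := agV i _ hrev1
    have ha2 := agV i _ hrev2
    have hmge : y1.length ≤ (S i).length - 1 - n - x1.length := by omega
    have hstep := pVm1 ((S i).length - 1 - n - x1.length) hmge
    have he1 : (S i).length - 1 - n - x1.length + x1.length = (S i).length - 1 - n := by
      omega
    have he2 : (S i).length - 1 - (n + x1.length) = (S i).length - 1 - n - x1.length := by
      omega
    rw [he1] at hstep
    calc Wf d u1 v1 (n + x1.length)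
        = (S i).getD (n + x1.length) d := hs2.symm
      _ = (S i).reverse.getD ((S i).length - 1 - (n + x1.length)) d := hr2
      _ = Wf d y2.reverse x2.reverse ((S i).length - 1 - (n + x1.length)) := ha2
      _ = Wf d y2.reverse x2.reverse ((S i).length - 1 - n - x1.length) := by rw [he2]
      _ = Wf d y2.reverse x2.reverse ((S i).length - 1 - n) := hstep.symm
      _ = (S i).reverse.getD ((S i).length - 1 - n) d := ha1.symm
      _ = (S i).getD n d := hr1.symm
      _ = Wf d u1 v1 n := hs1
  -- Transfer: V has period v1.length far out
  have pVa : ∃ M0, Per (Wf d y2.reverse x2.reverse) v1.length M0 := by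
    set K := u1.length + w1.length + y1.length with hKdef
    set C := K + (v1.length + 1) * x1.length + u1.length + y2.length + 1 with hCdef
    refine ⟨C * x2.length + x2.length + v1.length + 1, ?_⟩
    intro m hm
    set i := m / x2.length + (v1.length + 1) with hidef
    have hdm := Nat.div_add_mod m x2.length
    have hmlt := Nat.mod_lt m (show 0 < x2.length by omega)
    have hia : i * x2.length
        = (m / x2.length) * x2.length + (v1.length + 1) * x2.length := Nat.add_mul _ _ _
    have hcm : x2.length * (m / x2.length) = (m / x2.length) * x2.length := mul_comm _ _
    have hx1a : v1.length + 1 ≤ (v1.length + 1) * x2.length :=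
      Nat.le_mul_of_pos_right _ (by omega)
    have hx1b : v1.length + x2.length ≤ (v1.length + 1) * x2.length := by nlinarith
    have d1 : m + v1.length + 1 ≤ y2.length + i * x2.length := by omega
    have hdiv2 : C ≤ m / x2.length := by
      rw [Nat.le_div_iff_mul_le (show 0 < x2.length by omega)]
      omega
    have hib : i * x1.length
        = (m / x2.length) * x1.length + (v1.length + 1) * x1.length := Nat.add_mul _ _ _
    have hmono : (m / x2.length) * (x1.length + 1) ≤ (m / x2.length) * x2.length :=
      Nat.mul_le_mul_left _ (by omega)
    have hexp : (m / x2.length) * (x1.length + 1)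
        = (m / x2.length) * x1.length + (m / x2.length) := by ring
    have d2 : K + i * x1.length + 1 ≤ m + u1.length := by omega
    have hiP : i * (v1.length + x1.length) = i * v1.length + i * x1.length :=
      Nat.mul_add i _ _
    have hiP2 : i * (v1.length + x1.length) = i * v2.length + i * x2.length := by
      rw [hlen]; exact Nat.mul_add i _ _
    have hLi := hSlen i
    have him : i ≤ i * v2.length := Nat.le_mul_of_pos_right _ (by omega)
    have hidC : C ≤ i := by omega
    -- forward indices
    have hq2 : (S i).length - 1 - m < u1.length + i * v1.length := by omega
    have hq1 : (S i).length - 1 - (m + v1.length) < u1.length + i * v1.length := by omega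
    have hbase : u1.length ≤ (S i).length - 1 - (m + v1.length) := by omega
    have hmLi : m + v1.length < (S i).length := by omega
    have hr2 := grev i ((S i).length - 1 - m) (by omega)
    have hr1 := grev i ((S i).length - 1 - (m + v1.length)) (by omega)
    have he1 : (S i).length - 1 - ((S i).length - 1 - m) = m := by omega
    have he2 : (S i).length - 1 - ((S i).length - 1 - (m + v1.length)) = m + v1.length := by
      omega
    rw [he1] at hr2
    rw [he2] at hr1
    have ha2 := agV i m (by omega)
    have ha1 := agV i (m + v1.length) (by omega)
    have hstep := pWa ((S i).length - 1 - (m + v1.length)) hbase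
    have he3 : (S i).length - 1 - (m + v1.length) + v1.length = (S i).length - 1 - m := by
      omega
    calc Wf d y2.reverse x2.reverse (m + v1.length)
        = (S i).reverse.getD (m + v1.length) d := (ha1).symm
      _ = (S i).getD ((S i).length - 1 - (m + v1.length)) d := hr1.symm
      _ = Wf d u1 v1 ((S i).length - 1 - (m + v1.length)) := agW i _ hq1
      _ = Wf d u1 v1 ((S i).length - 1 - m) := by rw [← he3]; exact hstep.symm
      _ = (S i).getD ((S i).length - 1 - m) d := (agW i _ hq2).symm
      _ = (S i).reverse.getD m d := hr2
      _ = Wf d y2.reverse x2.reverse m := ha2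
  obtain ⟨N0, pWm1'⟩ := pWm1
  obtain ⟨M0, pVa'⟩ := pVa
  -- the common period G
  set G := Nat.gcd (Nat.gcd v1.length v2.length) x1.length with hGdef
  have hGa : G ∣ v1.length := (Nat.gcd_dvd_left _ _).trans (Nat.gcd_dvd_left _ _)
  have hGb : G ∣ v2.length := (Nat.gcd_dvd_left _ _).trans (Nat.gcd_dvd_right _ _)
  have hGm1 : G ∣ x1.length := Nat.gcd_dvd_right _ _
  have hGm2 : G ∣ x2.length := by
    have h1 : G ∣ v2.length + x2.length := by rw [← hlen]; exact dvd_add hGa hGm1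
    have h2 := Nat.dvd_sub h1 hGb
    have e : v2.length + x2.length - v2.length = x2.length := by omega
    rwa [e] at h2
  have hG1 : 1 ≤ G := by
    rcases Nat.eq_zero_or_pos G with h0 | h0
    · rw [h0] at hGa
      have := zero_dvd_iff.mp hGa
      omega
    · omega
  have hGa' : G ≤ v1.length := Nat.le_of_dvd (by omega) hGa
  have hGb' : G ≤ v2.length := Nat.le_of_dvd (by omega) hGb
  have hGm1' : G ≤ x1.length := Nat.le_of_dvd (by omega) hGm1
  have hGm2' : G ≤ x2.length := Nat.le_of_dvd (by omega) hGm2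
  -- G-periodicity of W from u1.length and u2.length
  have pWG : Per (Wf d u1 v1) G (N0 + u1.length + u2.length) := by
    have p1 : Per (Wf d u1 v1) v1.length (N0 + u1.length + u2.length) :=
      per_mono pWa (by omega)
    have p2 : Per (Wf d u1 v1) v2.length (N0 + u1.length + u2.length) :=
      per_mono pWb (by omega)
    have p3 : Per (Wf d u1 v1) x1.length (N0 + u1.length + u2.length) :=
      per_mono pWm1' (by omega)
    have hgab : 0 < Nat.gcd v1.length v2.length := Nat.gcd_pos_of_pos_left _ (by omega)
    exact per_gcd hgab (by omega)
      (per_gcd (by omega) (by omega) p1 p2) p3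
  have pWu1 : Per (Wf d u1 v1) G u1.length := per_boot (by omega) pWa pWG hGa
  have pWu2 : Per (Wf d u1 v1) G u2.length := per_boot (by omega) pWb pWG hGb
  -- G-periodicity of V from y1.length and y2.length
  have hGV : Nat.gcd (Nat.gcd x1.length x2.length) v1.length = G := by
    apply Nat.dvd_antisymm
    · have l1 : Nat.gcd (Nat.gcd x1.length x2.length) v1.length ∣ x1.length :=
        (Nat.gcd_dvd_left _ _).trans (Nat.gcd_dvd_left _ _)
      have l2 : Nat.gcd (Nat.gcd x1.length x2.length) v1.length ∣ x2.length :=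
        (Nat.gcd_dvd_left _ _).trans (Nat.gcd_dvd_right _ _)
      have l3 : Nat.gcd (Nat.gcd x1.length x2.length) v1.length ∣ v1.length :=
        Nat.gcd_dvd_right _ _
      have l4 : Nat.gcd (Nat.gcd x1.length x2.length) v1.length ∣ v2.length := by
        have hh : Nat.gcd (Nat.gcd x1.length x2.length) v1.length ∣ v2.length + x2.length := by
          rw [← hlen]; exact dvd_add l3 l1
        have hh2 := Nat.dvd_sub hh l2
        have e : v2.length + x2.length - x2.length = v2.length := by omega
        rwa [e] at hh2
      exact Nat.dvd_gcd (Nat.dvd_gcd l3 l4) l1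
    · exact Nat.dvd_gcd (Nat.dvd_gcd hGm1 hGm2) hGa
  have pVG : Per (Wf d y2.reverse x2.reverse) G (M0 + y1.length + y2.length) := by
    have p1 : Per (Wf d y2.reverse x2.reverse) x1.length (M0 + y1.length + y2.length) :=
      per_mono pVm1 (by omega)
    have p2 : Per (Wf d y2.reverse x2.reverse) x2.length (M0 + y1.length + y2.length) :=
      per_mono pVm2 (by omega)
    have p3 : Per (Wf d y2.reverse x2.reverse) v1.length (M0 + y1.length + y2.length) :=
      per_mono pVa' (by omega)
    have hgxx : 0 < Nat.gcd x1.length x2.length := Nat.gcd_pos_of_pos_left _ (by omega)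
    have hh := per_gcd hgxx (by omega)
      (per_gcd (by omega) (by omega) p1 p2) p3
    rwa [hGV] at hh
  have pVy1 : Per (Wf d y2.reverse x2.reverse) G y1.length :=
    per_boot (by omega) pVm1 pVG hGm1
  have pVy2 : Per (Wf d y2.reverse x2.reverse) G y2.length :=
    per_boot (by omega) pVm2 pVG hGm2
  -- relating the middle words to S
  have hT1len : ∀ i, (wpow v1 i ++ (w1 ++ wpow x1 i)).length
      = i * v1.length + (w1.length + i * x1.length) := by
    intro i; simp [wpow_len]
  have hT2len : ∀ i, (wpow v2 i ++ (w2 ++ wpow x2 i)).length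
      = i * v2.length + (w2.length + i * x2.length) := by
    intro i; simp [wpow_len]
  have hT1S : ∀ i n, n < i * v1.length + (w1.length + i * x1.length) →
      (wpow v1 i ++ (w1 ++ wpow x1 i)).getD n d = (S i).getD (u1.length + n) d := by
    intro i n hn
    symm
    simp only [hSdef]
    rw [List.getD_append_right _ _ _ _ (by omega : u1.length ≤ u1.length + n)]
    have e : u1.length + n - u1.length = n := by omega
    rw [e]
    have e2 : wpow v1 i ++ (w1 ++ (wpow x1 i ++ y1))
        = (wpow v1 i ++ (w1 ++ wpow x1 i)) ++ y1 := by simp [List.append_assoc]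
    rw [e2, List.getD_append _ _ _ _ (by rw [hT1len i]; omega)]
  have hT2S : ∀ i n, n < i * v2.length + (w2.length + i * x2.length) →
      (wpow v2 i ++ (w2 ++ wpow x2 i)).getD n d = (S i).getD (u2.length + n) d := by
    intro i n hn
    symm
    rw [hS2 i]
    rw [List.getD_append_right _ _ _ _ (by omega : u2.length ≤ u2.length + n)]
    have e : u2.length + n - u2.length = n := by omega
    rw [e]
    have e2 : wpow v2 i ++ (w2 ++ (wpow x2 i ++ y2))
        = (wpow v2 i ++ (w2 ++ wpow x2 i)) ++ y2 := by simp [List.append_assoc]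
    rw [e2, List.getD_append _ _ _ _ (by rw [hT2len i]; omega)]
  -- periodicity of the middle words, for large i
  set NN := (u1.length + w1.length + y1.length) + u1.length + u2.length
      + y1.length + y2.length + G + 2 with hNNdef
  have perT1 : ∀ i n, NN ≤ i → n + G < i * v1.length + (w1.length + i * x1.length) →
      (S i).getD (u1.length + n + G) d = (S i).getD (u1.length + n) d := by
    intro i n hNi hn
    have hLi := hSlen i
    have l1 : i * (v1.length + x1.length) = i * v1.length + i * x1.length :=
      Nat.mul_add i _ _
    have l2 : i * (v1.length + x1.length) = i * v2.length + i * x2.length := by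
      rw [hlen]; exact Nat.mul_add i _ _
    have l3 : i * v2.length + i ≤ i * v1.length := by
      have h' := Nat.mul_le_mul_left i (show v2.length + 1 ≤ v1.length by omega)
      rw [Nat.mul_succ] at h'
      exact h'
    have l4 : i ≤ i * x1.length := Nat.le_mul_of_pos_right _ (by omega)
    have l5 : i ≤ i * v2.length := Nat.le_mul_of_pos_right _ (by omega)
    rcases lt_or_ge (u1.length + n + G) (u1.length + i * v1.length) with hA | hA
    · rw [agW i (u1.length + n + G) hA, agW i (u1.length + n) (by omega)]
      have hh := pWu1 (u1.length + n) (by omega)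
      have e : u1.length + n + G = (u1.length + n) + G := by omega
      rw [e]
      exact hh
    rcases lt_or_ge (u1.length + n + G) ((S i).length - y2.length) with hB | hB
    · have hq2 : u1.length + n + G < (S i).length := by omega
      have hq1 : u1.length + n < (S i).length := by omega
      rw [grev i _ hq2, grev i _ hq1]
      have hrb1 : (S i).length - 1 - (u1.length + n) < y2.length + i * x2.length := by
        omega
      have hrb2 : (S i).length - 1 - (u1.length + n + G) < y2.length + i * x2.length := by
        omega
      rw [agV i _ hrb1, agV i _ hrb2]
      have hbase : y2.length ≤ (S i).length - 1 - (u1.length + n) - G := by omega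
      have hstep := pVy2 ((S i).length - 1 - (u1.length + n) - G) hbase
      have e1 : (S i).length - 1 - (u1.length + n) - G + G
          = (S i).length - 1 - (u1.length + n) := by omega
      have e2 : (S i).length - 1 - (u1.length + n + G)
          = (S i).length - 1 - (u1.length + n) - G := by omega
      rw [e1] at hstep
      rw [e2]
      exact hstep.symm
    · have hq2 : u1.length + n + G < (S i).length := by omega
      have hq1 : u1.length + n < (S i).length := by omega
      rw [grev i _ hq2, grev i _ hq1]
      have hrb1 : (S i).length - 1 - (u1.length + n) < y1.length + i * x1.length := by
        omega
      have hrb2 : (S i).length - 1 - (u1.length + n + G) < y1.length + i * x1.length := by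
        omega
      have ha1 := (agV2 i _ hrb1).trans (hVV _).symm
      have ha2 := (agV2 i _ hrb2).trans (hVV _).symm
      rw [ha1, ha2]
      have hbase : y1.length ≤ (S i).length - 1 - (u1.length + n) - G := by omega
      have hstep := pVy1 ((S i).length - 1 - (u1.length + n) - G) hbase
      have e1 : (S i).length - 1 - (u1.length + n) - G + G
          = (S i).length - 1 - (u1.length + n) := by omega
      have e2 : (S i).length - 1 - (u1.length + n + G)
          = (S i).length - 1 - (u1.length + n) - G := by omega
      rw [e1] at hstep
      rw [e2]
      exact hstep.symm
  have perT2 : ∀ i n, NN ≤ i → n + G < i * v2.length + (w2.length + i * x2.length) →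
      (S i).getD (u2.length + n + G) d = (S i).getD (u2.length + n) d := by
    intro i n hNi hn
    have hLi := hSlen i
    have l1 : i * (v1.length + x1.length) = i * v1.length + i * x1.length :=
      Nat.mul_add i _ _
    have l2 : i * (v1.length + x1.length) = i * v2.length + i * x2.length := by
      rw [hlen]; exact Nat.mul_add i _ _
    have l3 : i * v2.length + i ≤ i * v1.length := by
      have h' := Nat.mul_le_mul_left i (show v2.length + 1 ≤ v1.length by omega)
      rw [Nat.mul_succ] at h'
      exact h'
    have l4 : i ≤ i * x1.length := Nat.le_mul_of_pos_right _ (by omega)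
    have l5 : i ≤ i * v2.length := Nat.le_mul_of_pos_right _ (by omega)
    rcases lt_or_ge (u2.length + n + G) (u1.length + i * v1.length) with hA | hA
    · rw [agW i (u2.length + n + G) hA, agW i (u2.length + n) (by omega)]
      have hh := pWu2 (u2.length + n) (by omega)
      have e : u2.length + n + G = (u2.length + n) + G := by omega
      rw [e]
      exact hh
    · have hEnd : u2.length + n + G < (S i).length - y2.length := by omega
      have hq2 : u2.length + n + G < (S i).length := by omega
      have hq1 : u2.length + n < (S i).length := by omega
      rw [grev i _ hq2, grev i _ hq1]
      have hrb1 : (S i).length - 1 - (u2.length + n) < y2.length + i * x2.length := by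
        omega
      have hrb2 : (S i).length - 1 - (u2.length + n + G) < y2.length + i * x2.length := by
        omega
      rw [agV i _ hrb1, agV i _ hrb2]
      have hbase : y2.length ≤ (S i).length - 1 - (u2.length + n) - G := by omega
      have hstep := pVy2 ((S i).length - 1 - (u2.length + n) - G) hbase
      have e1 : (S i).length - 1 - (u2.length + n) - G + G
          = (S i).length - 1 - (u2.length + n) := by omega
      have e2 : (S i).length - 1 - (u2.length + n + G)
          = (S i).length - 1 - (u2.length + n) - G := by omega
      rw [e1] at hstep
      rw [e2]
      exact hstep.symm
  -- the period words and arithmetic helpers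
  have hGP : G ∣ (v1.length + x1.length) := dvd_add hGa hGm1
  set E := (v1.length + x1.length) / G with hEdef
  have hEG : E * G = v1.length + x1.length := Nat.div_mul_cancel hGP
  have hEpos : 1 ≤ E := by
    rw [hEdef, Nat.one_le_div_iff (show 0 < G by omega)]
    omega
  have hz1len : (v1.take G).length = G := by rw [List.length_take]; omega
  have hz2len : (v2.take G).length = G := by rw [List.length_take]; omega
  have hmodP : ∀ (c j : ℕ), (c + j * (v1.length + x1.length)) % G = c % G := by
    intro c j
    rw [← hEG]
    have e : j * (E * G) = c.succ * 0 + G * (j * E) := by ring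
    rw [e]
    have e2 : c + (Nat.succ c * 0 + G * (j * E)) = c + G * (j * E) := by ring
    rw [e2, Nat.add_mul_mod_self_left]
  have hdivP : ∀ (c j : ℕ),
      (c + j * (v1.length + x1.length)) / G = c / G + j * E := by
    intro c j
    rw [← hEG]
    have e : c + j * (E * G) = c + G * (j * E) := by ring
    rw [e, Nat.add_mul_div_left _ _ (show 0 < G by omega)]
  -- fit → closed form
  have form1 : ∀ i, (∀ n, n < i * v1.length + (w1.length + i * x1.length) →
        (wpow v1 i ++ (w1 ++ wpow x1 i)).getD n d = (v1.take G).getD (n % G) d) →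
      wpow v1 i ++ (w1 ++ wpow x1 i)
        = wpow (v1.take G) (w1.length / G + i * E)
          ++ (v1.take G).take (w1.length % G) := by
    intro i hfit
    have h0 := eq_pow_form (wpow v1 i ++ (w1 ++ wpow x1 i)) (v1.take G) d G hG1 hz1len
      (fun n hn => hfit n (by rw [hT1len i] at hn; omega))
    rw [hT1len i] at h0
    have e : i * v1.length + (w1.length + i * x1.length)
        = w1.length + i * (v1.length + x1.length) := by
      have := Nat.mul_add i v1.length x1.length
      omega
    rw [e, hdivP, hmodP] at h0
    exact h0
  have form2 : ∀ i, (∀ n, n < i * v2.length + (w2.length + i * x2.length) →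
        (wpow v2 i ++ (w2 ++ wpow x2 i)).getD n d = (v2.take G).getD (n % G) d) →
      wpow v2 i ++ (w2 ++ wpow x2 i)
        = wpow (v2.take G) (w2.length / G + i * E)
          ++ (v2.take G).take (w2.length % G) := by
    intro i hfit
    have h0 := eq_pow_form (wpow v2 i ++ (w2 ++ wpow x2 i)) (v2.take G) d G hG1 hz2len
      (fun n hn => hfit n (by rw [hT2len i] at hn; omega))
    rw [hT2len i] at h0
    have e : i * v2.length + (w2.length + i * x2.length)
        = w2.length + i * (v1.length + x1.length) := by
      have e1 : i * (v1.length + x1.length) = i * v2.length + i * x2.length := by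
        rw [hlen]; exact Nat.mul_add i _ _
      omega
    rw [e, hdivP, hmodP] at h0
    exact h0
  -- fit for large i
  have fit1big : ∀ i, NN ≤ i → ∀ n, n < i * v1.length + (w1.length + i * x1.length) →
      (wpow v1 i ++ (w1 ++ wpow x1 i)).getD n d = (v1.take G).getD (n % G) d := by
    intro i hNi n hn
    have hTper : ∀ m, m + G < (wpow v1 i ++ (w1 ++ wpow x1 i)).length →
        (wpow v1 i ++ (w1 ++ wpow x1 i)).getD (m + G) d
          = (wpow v1 i ++ (w1 ++ wpow x1 i)).getD m d := by
      intro m hm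
      rw [hT1len i] at hm
      rw [hT1S i (m + G) (by omega), hT1S i m (by omega)]
      have e : u1.length + (m + G) = u1.length + m + G := by omega
      rw [e]
      exact perT1 i m hNi (by omega)
    have hmm := period_mod _ d G hG1 hTper n (by rw [hT1len i]; omega)
    rw [hmm]
    obtain ⟨j, hj⟩ : ∃ j, i = j + 1 := ⟨i - 1, by omega⟩
    have hmlt : n % G < G := Nat.mod_lt _ (by omega)
    have hsplit : wpow v1 i ++ (w1 ++ wpow x1 i)
        = v1 ++ (wpow v1 j ++ (w1 ++ wpow x1 i)) := by
      rw [hj]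
      show (v1 ++ wpow v1 j) ++ (w1 ++ wpow x1 (j+1)) = _
      simp [List.append_assoc]
    rw [hsplit, List.getD_append _ _ _ _ (by omega : n % G < v1.length)]
    exact (getD_take v1 d hmlt (by omega)).symm
  have fit2big : ∀ i, NN ≤ i → ∀ n, n < i * v2.length + (w2.length + i * x2.length) →
      (wpow v2 i ++ (w2 ++ wpow x2 i)).getD n d = (v2.take G).getD (n % G) d := by
    intro i hNi n hn
    have hTper : ∀ m, m + G < (wpow v2 i ++ (w2 ++ wpow x2 i)).length →
        (wpow v2 i ++ (w2 ++ wpow x2 i)).getD (m + G) d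
          = (wpow v2 i ++ (w2 ++ wpow x2 i)).getD m d := by
      intro m hm
      rw [hT2len i] at hm
      rw [hT2S i (m + G) (by omega), hT2S i m (by omega)]
      have e : u2.length + (m + G) = u2.length + m + G := by omega
      rw [e]
      exact perT2 i m hNi (by omega)
    have hmm := period_mod _ d G hG1 hTper n (by rw [hT2len i]; omega)
    rw [hmm]
    obtain ⟨j, hj⟩ : ∃ j, i = j + 1 := ⟨i - 1, by omega⟩
    have hmlt : n % G < G := Nat.mod_lt _ (by omega)
    have hsplit : wpow v2 i ++ (w2 ++ wpow x2 i)
        = v2 ++ (wpow v2 j ++ (w2 ++ wpow x2 i)) := by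
      rw [hj]
      show (v2 ++ wpow v2 j) ++ (w2 ++ wpow x2 (j+1)) = _
      simp [List.append_assoc]
    rw [hsplit, List.getD_append _ _ _ _ (by omega : n % G < v2.length)]
    exact (getD_take v2 d hmlt (by omega)).symm
  -- step down
  have step1 : ∀ i,
      (wpow v1 (i+1) ++ (w1 ++ wpow x1 (i+1))
        = wpow (v1.take G) (w1.length / G + (i+1) * E)
          ++ (v1.take G).take (w1.length % G)) →
      ∀ n, n < i * v1.length + (w1.length + i * x1.length) →
      (wpow v1 i ++ (w1 ++ wpow x1 i)).getD n d = (v1.take G).getD (n % G) d := by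
    intro i hform n hn
    have hrel : (wpow v1 i ++ (w1 ++ wpow x1 i)).getD n d
        = (wpow v1 (i+1) ++ (w1 ++ wpow x1 (i+1))).getD (v1.length + n) d := by
      have hTip : wpow v1 (i+1) ++ (w1 ++ wpow x1 (i+1))
          = v1 ++ ((wpow v1 i ++ (w1 ++ wpow x1 i)) ++ x1) := by
        rw [wpow_succ' x1 i]
        show (v1 ++ wpow v1 i) ++ (w1 ++ (wpow x1 i ++ x1)) = _
        simp [List.append_assoc]
      have e : v1.length + n - v1.length = n := by omega
      have hstepA : (wpow v1 (i+1) ++ (w1 ++ wpow x1 (i+1))).getD (v1.length + n) d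
          = ((wpow v1 i ++ (w1 ++ wpow x1 i)) ++ x1).getD n d := by
        rw [hTip, List.getD_append_right _ _ _ _
          (by omega : v1.length ≤ v1.length + n), e]
      have hstepB : ((wpow v1 i ++ (w1 ++ wpow x1 i)) ++ x1).getD n d
          = (wpow v1 i ++ (w1 ++ wpow x1 i)).getD n d :=
        List.getD_append _ _ _ _ (by rw [hT1len i]; omega)
      exact (hstepA.trans hstepB).symm
    rw [hrel, hform]
    have hc1G : (w1.length / G) * G + w1.length % G = w1.length := by
      have h1 := Nat.div_add_mod w1.length G
      have h2 : G * (w1.length / G) = (w1.length / G) * G := mul_comm _ _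
      omega
    have hmul : (w1.length / G + (i+1) * E) * G
        = (w1.length / G) * G + (i+1) * (E * G) := by ring
    have hP1 : (i+1) * (v1.length + x1.length)
        = i * v1.length + i * x1.length + v1.length + x1.length := by ring
    have hρ : w1.length % G < G := Nat.mod_lt _ (by omega)
    have hbound : v1.length + n < (w1.length / G + (i+1) * E) * G := by
      rw [hmul, hEG]
      omega
    rw [List.getD_append _ _ _ _ (by rw [wpow_len, hz1len]; exact hbound)]
    rw [wpow_getD d (v1.take G) _ _ (by rw [hz1len]; exact hbound), hz1len]
    congr 1
    obtain ⟨k, hk⟩ := hGa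
    rw [hk, Nat.mul_add_mod]
  have step2 : ∀ i,
      (wpow v2 (i+1) ++ (w2 ++ wpow x2 (i+1))
        = wpow (v2.take G) (w2.length / G + (i+1) * E)
          ++ (v2.take G).take (w2.length % G)) →
      ∀ n, n < i * v2.length + (w2.length + i * x2.length) →
      (wpow v2 i ++ (w2 ++ wpow x2 i)).getD n d = (v2.take G).getD (n % G) d := by
    intro i hform n hn
    have hrel : (wpow v2 i ++ (w2 ++ wpow x2 i)).getD n d
        = (wpow v2 (i+1) ++ (w2 ++ wpow x2 (i+1))).getD (v2.length + n) d := by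
      have hTip : wpow v2 (i+1) ++ (w2 ++ wpow x2 (i+1))
          = v2 ++ ((wpow v2 i ++ (w2 ++ wpow x2 i)) ++ x2) := by
        rw [wpow_succ' x2 i]
        show (v2 ++ wpow v2 i) ++ (w2 ++ (wpow x2 i ++ x2)) = _
        simp [List.append_assoc]
      have e : v2.length + n - v2.length = n := by omega
      have hstepA : (wpow v2 (i+1) ++ (w2 ++ wpow x2 (i+1))).getD (v2.length + n) d
          = ((wpow v2 i ++ (w2 ++ wpow x2 i)) ++ x2).getD n d := by
        rw [hTip, List.getD_append_right _ _ _ _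
          (by omega : v2.length ≤ v2.length + n), e]
      have hstepB : ((wpow v2 i ++ (w2 ++ wpow x2 i)) ++ x2).getD n d
          = (wpow v2 i ++ (w2 ++ wpow x2 i)).getD n d :=
        List.getD_append _ _ _ _ (by rw [hT2len i]; omega)
      exact (hstepA.trans hstepB).symm
    rw [hrel, hform]
    have hc1G : (w2.length / G) * G + w2.length % G = w2.length := by
      have h1 := Nat.div_add_mod w2.length G
      have h2 : G * (w2.length / G) = (w2.length / G) * G := mul_comm _ _
      omega
    have hmul : (w2.length / G + (i+1) * E) * G
        = (w2.length / G) * G + (i+1) * (E * G) := by ring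
    have hP1 : (i+1) * (v1.length + x1.length)
        = i * v2.length + i * x2.length + v2.length + x2.length := by
      rw [hlen]; ring
    have hρ : w2.length % G < G := Nat.mod_lt _ (by omega)
    have hbound : v2.length + n < (w2.length / G + (i+1) * E) * G := by
      rw [hmul, hEG]
      omega
    rw [List.getD_append _ _ _ _ (by rw [wpow_len, hz2len]; exact hbound)]
    rw [wpow_getD d (v2.take G) _ _ (by rw [hz2len]; exact hbound), hz2len]
    congr 1
    obtain ⟨k, hk⟩ := hGb
    rw [hk, Nat.mul_add_mod]
  -- closed forms for all i
  have hF1 : ∀ i, wpow v1 i ++ (w1 ++ wpow x1 i)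
      = wpow (v1.take G) (w1.length / G + i * E) ++ (v1.take G).take (w1.length % G) := by
    have down : ∀ k i,
        (wpow v1 (i+k) ++ (w1 ++ wpow x1 (i+k))
          = wpow (v1.take G) (w1.length / G + (i+k) * E)
            ++ (v1.take G).take (w1.length % G)) →
        wpow v1 i ++ (w1 ++ wpow x1 i)
          = wpow (v1.take G) (w1.length / G + i * E)
            ++ (v1.take G).take (w1.length % G) := by
      intro k
      induction k with
      | zero => intro i h0; simpa using h0
      | succ j ih =>
        intro i h0
        have e : i + (j+1) = (i+1) + j := by omega
        rw [e] at h0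
        have h1 := ih (i+1) h0
        exact form1 i (step1 i h1)
    intro i
    exact down NN i (form1 (i + NN) (fit1big (i + NN) (by omega)))
  have hF2 : ∀ i, wpow v2 i ++ (w2 ++ wpow x2 i)
      = wpow (v2.take G) (w2.length / G + i * E) ++ (v2.take G).take (w2.length % G) := by
    have down : ∀ k i,
        (wpow v2 (i+k) ++ (w2 ++ wpow x2 (i+k))
          = wpow (v2.take G) (w2.length / G + (i+k) * E)
            ++ (v2.take G).take (w2.length % G)) →
        wpow v2 i ++ (w2 ++ wpow x2 i)
          = wpow (v2.take G) (w2.length / G + i * E)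
            ++ (v2.take G).take (w2.length % G) := by
      intro k
      induction k with
      | zero => intro i h0; simpa using h0
      | succ j ih =>
        intro i h0
        have e : i + (j+1) = (i+1) + j := by omega
        rw [e] at h0
        have h1 := ih (i+1) h0
        exact form2 i (step2 i h1)
    intro i
    exact down NN i (form2 (i + NN) (fit2big (i + NN) (by omega)))
  -- rotation relating the two period words
  set τ := (u2.length % G + G - u1.length % G) % G with hτdef
  have hτ : τ < G := Nat.mod_lt _ (by omega)
  have hz1W : ∀ r, r < G → (v1.take G).getD r d = Wf d u1 v1 (u1.length + r) := by
    intro r hr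
    simp only [Wf]
    rw [if_neg (by omega)]
    have e : u1.length + r - u1.length = r := by omega
    rw [e, Nat.mod_eq_of_lt (by omega : r < v1.length)]
    exact getD_take v1 d hr (by omega)
  have hz2W : ∀ r, r < G → (v2.take G).getD r d = Wf d u1 v1 (u2.length + r) := by
    intro r hr
    rw [hWW]
    simp only [Wf]
    rw [if_neg (by omega)]
    have e : u2.length + r - u2.length = r := by omega
    rw [e, Nat.mod_eq_of_lt (by omega : r < v2.length)]
    exact getD_take v2 d hr (by omega)
  have hWval : ∀ m n, u1.length ≤ m → u2.length ≤ n → m % G = n % G →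
      Wf d u1 v1 m = Wf d u1 v1 n := by
    intro m n hm hn hmod
    have l1 : Wf d u1 v1 (n + (u1.length + 1) * G) = Wf d u1 v1 n :=
      per_iter pWu2 (u1.length + 1) n hn
    have hkk : u1.length + 1 ≤ (u1.length + 1) * G := Nat.le_mul_of_pos_right _ (by omega)
    have l2 : Wf d u1 v1 m = Wf d u1 v1 (n + (u1.length + 1) * G) := by
      apply per_eq hG1 pWu1 m _ hm (by omega)
      rw [Nat.add_mul_mod_self_right]
      exact hmod
    exact l2.trans l1
  have hmodτ : ∀ r, (u1.length + τ + r) % G = (u2.length + r) % G := by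
    intro r
    have h1 : (u1.length + τ + r) % G
        = (u1.length + (u2.length % G + G - u1.length % G) + r) % G := by
      have hm : Nat.ModEq G τ (u2.length % G + G - u1.length % G) := Nat.mod_modEq _ _
      exact (hm.add_left u1.length).add_right r
    rw [h1]
    have h4 := Nat.div_add_mod u1.length G
    have h5 : u1.length % G < G := Nat.mod_lt _ (by omega)
    have h6 : u2.length % G < G := Nat.mod_lt _ (by omega)
    have e : u1.length + (u2.length % G + G - u1.length % G) + r
        = G * (u1.length / G + 1) + (u2.length % G + r) := by
      have e2 : G * (u1.length / G + 1) = G * (u1.length / G) + G := by ring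
      omega
    rw [e, Nat.mul_add_mod]
    have hm2 : Nat.ModEq G (u2.length % G) u2.length := Nat.mod_modEq _ _
    exact hm2.add_right r
  have hrot : v2.take G = (v1.take G).drop τ ++ (v1.take G).take τ := by
    have hlen2 : ((v1.take G).drop τ ++ (v1.take G).take τ).length = G := by
      simp only [List.length_append, List.length_drop, List.length_take]
      omega
    apply List.ext_getElem (by rw [hz2len, hlen2])
    intro r h1 h2
    rw [← List.getD_eq_getElem _ d h1, ← List.getD_eq_getElem _ d h2]
    have hrG : r < G := by rw [hz2len] at h1; omega
    rw [hz2W r hrG]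
    rcases lt_or_ge r (G - τ) with hcs | hcs
    · rw [List.getD_append _ _ _ _ (by rw [List.length_drop, hz1len]; omega)]
      rw [getD_drop _ d (by rw [hz1len]; omega : τ + r < (v1.take G).length)]
      rw [hz1W (τ + r) (by omega)]
      exact (hWval (u1.length + (τ + r)) (u2.length + r) (by omega) (by omega)
        (by have := hmodτ r; have e : u1.length + (τ + r) = u1.length + τ + r := by omega
            rw [e]; exact this)).symm
    · rw [List.getD_append_right _ _ _ _ (by rw [List.length_drop, hz1len]; omega)]
      rw [List.length_drop, hz1len]
      have hidx : r - (G - τ) < τ := by omega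
      rw [getD_take _ d hidx (by rw [hz1len]; omega)]
      rw [hz1W (r - (G - τ)) (by omega)]
      refine (hWval (u1.length + (r - (G - τ))) (u2.length + r) (by omega) (by omega) ?_).symm
      have e0 : (u1.length + (r - (G - τ))) % G = (u1.length + (r - (G - τ)) + G) % G :=
        (Nat.add_mod_right _ G).symm
      have e1 : u1.length + (r - (G - τ)) + G = u1.length + τ + r := by omega
      rw [e0, e1]
      exact hmodτ r
  -- final assembly
  have hwrot : ∀ M, wpow (v1.take G) (M+1)
      = (v1.take G).take τ ++ (wpow (v2.take G) M ++ (v1.take G).drop τ) := by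
    intro M
    have h0 := wpow_rot ((v1.take G).take τ) ((v1.take G).drop τ) M
    rw [List.take_append_drop, ← hrot] at h0
    rw [h0]
    simp [List.append_assoc]
  have hz2ne : v2.take G ≠ [] := by
    intro hnil
    have := congrArg List.length hnil
    rw [hz2len] at this
    simp at this
    omega
  refine ⟨v2.take G, hz2ne, ?_⟩
  rcases le_or_gt (w2.length / G + 1) (w1.length / G) with hcc | hcc
  · refine ⟨((v1.take G).take τ ++ wpow (v2.take G) (w1.length / G - 1 - w2.length / G),
      (v1.take G).drop τ ++ (v1.take G).take (w1.length % G)),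
      ([], (v2.take G).take (w2.length % G)), ?_⟩
    intro i hi
    have hiE : 1 ≤ i * E := Nat.mul_pos hi hEpos
    refine ⟨w2.length / G + i * E, ?_, ?_⟩
    · have hsum : w1.length / G + i * E
          = ((w1.length / G - 1 - w2.length / G) + (w2.length / G + i * E)) + 1 := by omega
      have h1 := hF1 i
      rw [hsum, hwrot, wpow_add] at h1
      calc wpow v1 i ++ w1 ++ wpow x1 i
          = wpow v1 i ++ (w1 ++ wpow x1 i) := by rw [List.append_assoc]
        _ = _ := h1
        _ = capp ((v1.take G).take τ ++ wpow (v2.take G) (w1.length / G - 1 - w2.length / G),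
            (v1.take G).drop τ ++ (v1.take G).take (w1.length % G))
            (wpow (v2.take G) (w2.length / G + i * E)) := by
          simp [capp, List.append_assoc]
    · have h2 := hF2 i
      calc wpow v2 i ++ w2 ++ wpow x2 i
          = wpow v2 i ++ (w2 ++ wpow x2 i) := by rw [List.append_assoc]
        _ = _ := h2
        _ = capp ([], (v2.take G).take (w2.length % G))
            (wpow (v2.take G) (w2.length / G + i * E)) := by
          simp [capp]
  · refine ⟨((v1.take G).take τ,
      (v1.take G).drop τ ++ (v1.take G).take (w1.length % G)),
      (wpow (v2.take G) (w2.length / G + 1 - w1.length / G),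
        (v2.take G).take (w2.length % G)), ?_⟩
    intro i hi
    have hiE : 1 ≤ i * E := Nat.mul_pos hi hEpos
    refine ⟨w1.length / G + i * E - 1, ?_, ?_⟩
    · have hsum : w1.length / G + i * E = (w1.length / G + i * E - 1) + 1 := by
        generalize w1.length / G = A
        omega
      have h1 := hF1 i
      rw [hsum, hwrot] at h1
      calc wpow v1 i ++ w1 ++ wpow x1 i
          = wpow v1 i ++ (w1 ++ wpow x1 i) := by rw [List.append_assoc]
        _ = _ := h1
        _ = capp ((v1.take G).take τ,
            (v1.take G).drop τ ++ (v1.take G).take (w1.length % G))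
            (wpow (v2.take G) (w1.length / G + i * E - 1)) := by
          simp [capp, List.append_assoc]
    · have hsum2 : w2.length / G + i * E
          = (w2.length / G + 1 - w1.length / G) + (w1.length / G + i * E - 1) := by
        have hcc' := hcc
        revert hcc'
        generalize w1.length / G = A
        generalize w2.length / G = Bq
        intro hcc'
        omega
      have h2 := hF2 i
      rw [hsum2, wpow_add] at h2
      calc wpow v2 i ++ w2 ++ wpow x2 i
          = wpow v2 i ++ (w2 ++ wpow x2 i) := by rw [List.append_assoc]
        _ = _ := h2
        _ = capp (wpow (v2.take G) (w2.length / G + 1 - w1.length / G),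
            (v2.take G).take (w2.length % G))
            (wpow (v2.take G) (w1.length / G + i * E - 1)) := by
          simp [capp, List.append_assoc]

end CombAux

theorem comb_2_2_unbalanced {B : Type*} (u1 w1 y1 u2 w2 y2 v1 x1 v2 x2 : List B)
    (hv1 : v1 ≠ []) (hx1 : x1 ≠ []) (hv2 : v2 ≠ []) (hx2 : x2 ≠ [])
    (hlen : v1.length + x1.length = v2.length + x2.length)
    (hne1 : v1.length ≠ v2.length) (hne2 : x1.length ≠ x2.length)
    (h : ∀ i : ℕ,
      u1 ++ wpow v1 i ++ w1 ++ wpow x1 i ++ y1 =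
        u2 ++ wpow v2 i ++ w2 ++ wpow x2 i ++ y2) :
    ∃ x : List B, x ≠ [] ∧ ∃ f1 f2 : List B × List B,
      ∀ i : ℕ, 1 ≤ i → ∃ k : ℕ,
        wpow v1 i ++ w1 ++ wpow x1 i = capp f1 (wpow x k) ∧
        wpow v2 i ++ w2 ++ wpow x2 i = capp f2 (wpow x k) := by
  rcases Nat.lt_or_ge v2.length v1.length with hba | hge
  · exact CombAux.key u1 w1 y1 u2 w2 y2 v1 x1 v2 x2 hv1 hx1 hv2 hx2 hlen hba h
  · have hba' : v1.length < v2.length := by omega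
    obtain ⟨x, hx, f1, f2, hf⟩ := CombAux.key u2 w2 y2 u1 w1 y1 v2 x2 v1 x1
      hv2 hx2 hv1 hx1 hlen.symm hba' (fun i => (h i).symm)
    refine ⟨x, hx, f2, f1, fun i hi => ?_⟩
    obtain ⟨k, h1, h2⟩ := hf i hi
    exact ⟨k, h2, h1⟩
end

section
/- Let c, d, e be contexts on B with |e| > 0, and let x, x' be nonempty primitive words over B. If the triple (c, d, e) is both x-commuting and x'-commuting, then x and x' are conjugate. -/
def List.get? {α : Type*} (l : List α) (n : ℕ) : Option α := l[n]?

theorem List.get?_append {α : Type*} {l1 l2 : List α} {n : ℕ} (h : n < l1.length) :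
    (l1 ++ l2).get? n = l1.get? n := by
  simp [List.get?, List.getElem?_append_left h]

theorem List.get?_append_right {α : Type*} {l1 l2 : List α} {n : ℕ} (h : l1.length ≤ n) :
    (l1 ++ l2).get? n = l2.get? (n - l1.length) := by
  simp [List.get?, List.getElem?_append_right h]

theorem List.get?_take {α : Type*} {l : List α} {n m : ℕ} (h : n < m) :
    (l.take m).get? n = l.get? n := by
  simp [List.get?, List.getElem?_take, h]

theorem List.get?_drop {α : Type*} {l : List α} {i j : ℕ} :
    (l.drop i).get? j = l.get? (i + j) := by
  simp [List.get?, List.getElem?_drop]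

theorem List.get?_eq_none {α : Type*} {l : List α} {n : ℕ} :
    l.get? n = none ↔ l.length ≤ n := by
  simp [List.get?]

theorem List.ext_get? {α : Type*} {l1 l2 : List α} (h : ∀ n, l1.get? n = l2.get? n) :
    l1 = l2 := List.ext_getElem? h

lemma wpow_succ {B : Type*} (x : List B) (n : ℕ) : wpow x (n+1) = x ++ wpow x n := rfl

lemma wpow_length {B : Type*} (x : List B) : ∀ n, (wpow x n).length = n * x.length
  | 0 => by simp [wpow]
  | n+1 => by
    rw [wpow_succ, List.length_append, wpow_length x n, Nat.succ_mul]; ring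

lemma wpow_succ' {B : Type*} (x : List B) : ∀ n, wpow x (n+1) = wpow x n ++ x
  | 0 => by simp [wpow]
  | n+1 => by
    rw [wpow_succ x (n+1), wpow_succ' x n, ← List.append_assoc, ← wpow_succ x n, ← wpow_succ' x n]

/-- `w` has period `p`. -/
def PerP {B : Type*} (w : List B) (p : ℕ) : Prop :=
  ∀ t, t + p < w.length → w.get? t = w.get? (t + p)

lemma perp_wpow {B : Type*} (x : List B) (k : ℕ) : PerP (wpow x k) x.length := by
  rcases k with _ | k
  · intro t ht; simp [wpow] at ht
  · intro t ht
    rw [wpow_succ, List.length_append] at ht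
    have h2 : (wpow x (k+1)).get? (t + x.length) = (wpow x k).get? t := by
      rw [wpow_succ, List.get?_append_right (by omega)]
      congr 1; omega
    have h1 : (wpow x (k+1)).get? t = (wpow x k).get? t := by
      rw [wpow_succ' x k]
      exact List.get?_append (by omega)
    rw [h1, h2]

lemma wpow_get?_mul {B : Type*} (x : List B) (t : ℕ) (ht : t < x.length) :
    ∀ m k, m < k → (wpow x k).get? (m * x.length + t) = x.get? t := by
  intro m
  induction m with
  | zero =>
    intro k hk
    match k, hk with
    | k+1, _ =>
      rw [wpow_succ, Nat.zero_mul, Nat.zero_add, List.get?_append ht]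
  | succ m ih =>
    intro k hk
    match k, hk with
    | k+1, hk =>
      rw [wpow_succ, show (m+1) * x.length + t = x.length + (m * x.length + t) by ring,
        List.get?_append_right (by omega), Nat.add_sub_cancel_left]
      exact ih k (by omega)

lemma perp_sub {B : Type*} {w : List B} {p q : ℕ} (hq : q ≤ p) (hp : PerP w p)
    (hqq : PerP w q) (hlen : p + q ≤ w.length) : PerP w (p - q) := by
  intro t ht
  by_cases h : t + p < w.length
  · have h1 := hp t h
    have h2 := hqq (t + (p - q)) (by omega)
    rw [show t + (p - q) + q = t + p by omega] at h2
    rw [h1, h2]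
  · have h1 := hqq (t - q) (by omega)
    have h2 := hp (t - q) (by omega)
    rw [show t - q + q = t by omega] at h1
    rw [show t - q + p = t + (p - q) by omega] at h2
    rw [← h1, h2]

lemma fw {B : Type*} : ∀ n (p q : ℕ) (w : List B), p + q ≤ n → PerP w p → PerP w q →
    p + q ≤ w.length → PerP w (Nat.gcd p q) := by
  intro n
  induction n with
  | zero =>
    intro p q w h hp hq _
    have hp0 : p = 0 := by omega
    have hq0 : q = 0 := by omega
    subst hp0; subst hq0
    intro t ht; simp
  | succ n ih =>
    intro p q w h hp hq hlen
    rcases Nat.eq_zero_or_pos q with hq0 | hq0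
    · subst hq0; rw [Nat.gcd_zero_right]; exact hp
    rcases Nat.eq_zero_or_pos p with hp0 | hp0
    · subst hp0; rw [Nat.gcd_zero_left]; exact hq
    rcases le_total q p with hle | hle
    · have hsub := perp_sub hle hp hq hlen
      have := ih (p - q) q w (by omega) hsub hq (by omega)
      rwa [Nat.gcd_sub_self_left hle] at this
    · have hsub := perp_sub hle hq hp (by omega)
      have := ih (q - p) p w (by omega) hsub hp (by omega)
      rw [Nat.gcd_sub_self_left hle] at this
      rwa [Nat.gcd_comm] at this

lemma ceil_exists (p : ℕ) (hp : 0 < p) : ∀ a, ∃ m, a ≤ m * p ∧ m * p < a + p := by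
  intro a
  induction a with
  | zero => exact ⟨0, by simp, by simpa⟩
  | succ a ih =>
    obtain ⟨m, h1, h2⟩ := ih
    by_cases h : a + 1 ≤ m * p
    · exact ⟨m, h, by omega⟩
    · have hma : m * p = a := by omega
      have hsm : (m + 1) * p = a + p := by rw [Nat.succ_mul, hma]
      exact ⟨m + 1, by omega, by omega⟩

lemma lt_of_get?_eq {B : Type*} {u v : List B} {t j : ℕ} (ht : t < u.length)
    (h : u.get? t = v.get? j) : j < v.length := by
  by_contra hj
  rw [List.get?_eq_none.mpr (le_of_not_gt hj)] at h
  exact absurd (List.get?_eq_none.mp h) (by omega)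

lemma eq_wpow_of_perp {B : Type*} (g : ℕ) (hg : 0 < g) :
    ∀ (q : ℕ) (x : List B), x.length = q * g → PerP x g → x = wpow (x.take g) q := by
  intro q
  induction q with
  | zero =>
    intro x hlen _
    have hx0 : x = [] := List.eq_nil_of_length_eq_zero (by simpa using hlen)
    subst hx0; simp [wpow]
  | succ q ih =>
    intro x hlen hper
    have hsm : (q + 1) * g = q * g + g := Nat.succ_mul q g
    have hgle : g ≤ x.length := by rw [hlen, hsm]; omega
    have hdl : (x.drop g).length = q * g := by rw [List.length_drop, hlen, hsm]; omega
    have hdper : PerP (x.drop g) g := by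
      intro t ht
      rw [List.length_drop] at ht
      rw [List.get?_drop, List.get?_drop]
      have := hper (g + t) (by omega)
      rwa [show g + t + g = g + (t + g) by omega] at this
    have hxd := ih (x.drop g) hdl hdper
    rw [wpow_succ]
    rcases Nat.eq_zero_or_pos q with hq0 | hq0
    · subst hq0
      have hxg : x.length ≤ g := by rw [hlen]; omega
      simp [wpow, List.take_of_length_le hxg]
    · have hteq : (x.drop g).take g = x.take g := by
        apply List.ext_get?
        intro n
        by_cases hn : n < g
        · rw [List.get?_take hn, List.get?_take hn, List.get?_drop]
          have hqg : g ≤ q * g := Nat.le_mul_of_pos_left g hq0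
          have := hper n (by rw [hlen, hsm]; omega)
          rw [show g + n = n + g by omega, ← this]
        · have h1 : ((x.drop g).take g).length ≤ n := by
            rw [List.length_take]; omega
          have h2 : (x.take g).length ≤ n := by
            rw [List.length_take]; omega
          rw [List.get?_eq_none.mpr h1, List.get?_eq_none.mpr h2]
      rw [hteq] at hxd
      rw [← hxd]
      exact (List.take_append_drop g x).symm

lemma main_aux {B : Type*} (w : List B) (f : List B × List B) (x : List B) (k : ℕ)
    (hw : w = f.1 ++ wpow x k ++ f.2) (s L : ℕ) (hxlen : 0 < x.length)
    (hs : f.1.length ≤ s) (hL : 2 * x.length ≤ L)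
    (hend : s + L + f.2.length ≤ w.length) :
    PerP ((w.drop s).take L) x.length ∧
      ∃ δ, δ < x.length ∧
        ∀ t, t < x.length → x.get? t = ((w.drop s).take L).get? (δ + t) := by
  have hwlen : w.length = f.1.length + k * x.length + f.2.length := by
    rw [hw]; simp [wpow_length]; ring
  set KX := k * x.length with hKX
  have hkey : s + L ≤ f.1.length + KX := by omega
  have hvget : ∀ t, t < L → ((w.drop s).take L).get? t = w.get? (s + t) := by
    intro t ht; rw [List.get?_take ht, List.get?_drop]
  have hwget : ∀ j, j < KX → w.get? (f.1.length + j) = (wpow x k).get? j := by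
    intro j hj
    rw [hw, List.append_assoc, List.get?_append_right (by omega),
      Nat.add_sub_cancel_left, List.get?_append (by rw [wpow_length, ← hKX]; omega)]
  constructor
  · intro t ht
    have hvlen : ((w.drop s).take L).length = L := by
      simp [List.length_take, List.length_drop]; omega
    rw [hvlen] at ht
    rw [hvget t (by omega), hvget (t + x.length) (by omega)]
    have e1 : s + t = f.1.length + (s + t - f.1.length) := by omega
    rw [e1, hwget _ (by omega)]
    have e2 : s + (t + x.length) = f.1.length + ((s + t - f.1.length) + x.length) := by omega
    rw [e2, hwget _ (by omega)]
    exact perp_wpow x k _ (by rw [wpow_length, ← hKX]; omega)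
  · obtain ⟨m, hm1, hm2⟩ := ceil_exists x.length hxlen (s - f.1.length)
    set MX := m * x.length with hMX
    refine ⟨MX - (s - f.1.length), by omega, ?_⟩
    intro t htx
    have hmk : m < k := by
      have h1 : MX + x.length ≤ KX := by omega
      have h2 : (m + 1) * x.length ≤ k * x.length := by
        rw [Nat.succ_mul, ← hMX, ← hKX]; exact h1
      exact Nat.lt_of_succ_le (Nat.le_of_mul_le_mul_right h2 hxlen)
    rw [hvget _ (by omega)]
    have e3 : s + (MX - (s - f.1.length) + t) = f.1.length + (MX + t) := by omega
    rw [e3, hwget _ (by omega), hMX]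
    exact (wpow_get?_mul x t htx m k hmk).symm

lemma conj_aux {B : Type*} (v x x' : List B) (g : ℕ)
    (hxl : x.length = g) (hx'l : x'.length = g) (hv : PerP v g)
    (δ δ' : ℕ) (hle : δ ≤ δ') (hδ' : δ' < g)
    (hocc : ∀ t, t < g → x.get? t = v.get? (δ + t))
    (hocc' : ∀ t, t < g → x'.get? t = v.get? (δ' + t)) : Conj x x' := by
  refine ⟨x.take (δ' - δ), x.drop (δ' - δ), (List.take_append_drop _ _).symm, ?_⟩
  apply List.ext_get?
  intro n
  have hlt : (x.take (δ' - δ)).length = δ' - δ := by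
    rw [List.length_take, hxl]; omega
  have hld : (x.drop (δ' - δ)).length = g - (δ' - δ) := by
    rw [List.length_drop, hxl]
  by_cases hn : n < g
  · rw [hocc' n hn]
    by_cases h2 : n < g - (δ' - δ)
    · rw [List.get?_append (by rw [hld]; omega), List.get?_drop]
      have h3 := hocc ((δ' - δ) + n) (by omega)
      rw [h3, show δ + ((δ' - δ) + n) = δ' + n by omega]
    · rw [List.get?_append_right (by rw [hld]; omega), hld,
        List.get?_take (by omega)]
      have hocc2 := hocc (n - (g - (δ' - δ))) (by omega)
      rw [hocc2]
      have hlen' : δ' + n < v.length := lt_of_get?_eq (by omega) (hocc' n hn)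
      have hper := hv (δ + (n - (g - (δ' - δ)))) (by omega)
      rw [show δ' + n = δ + (n - (g - (δ' - δ))) + g by omega]
      exact hper.symm
  · rw [List.get?_eq_none.mpr (by omega : x'.length ≤ n), List.get?_eq_none.mpr]
    rw [List.length_append, hld, hlt]; omega

theorem conjugate_of_com_com {B : Type*} (c d e : List B × List B)
    (he : 0 < clen e) (x x' : List B)
    (hx : Primitive x) (hx' : Primitive x')
    (hcom : XCommuting c d e x) (hcom' : XCommuting c d e x') :
    Conj x x' := by
  obtain ⟨f, hf⟩ := hcom
  obtain ⟨f', hf'⟩ := hcom'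
  have hxlen : 0 < x.length := List.length_pos_iff.mpr hx.1
  have hx'len : 0 < x'.length := List.length_pos_iff.mpr hx'.1
  set i := clen f + clen f' + 2 * (x.length + x'.length) + 1 with hi
  obtain ⟨k, hk⟩ := hf i (by omega)
  obtain ⟨k', hk'⟩ := hf' i (by omega)
  set w := capp (cmul (cpow e i) (cmul d c)) [] with hwdef
  have hk2 : w = f.1 ++ wpow x k ++ f.2 := hk
  have hk2' : w = f'.1 ++ wpow x' k' ++ f'.2 := hk'
  have he' : 0 < e.1.length + e.2.length := he
  have hwlen : w.length = i * e.1.length + i * e.2.length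
      + (d.1.length + d.2.length + (c.1.length + c.2.length)) := by
    rw [hwdef]; simp [capp, cmul, cpow, wpow_length]; ring
  have hii : i ≤ i * e.1.length + i * e.2.length := by
    calc i = i * 1 := (Nat.mul_one i).symm
      _ ≤ i * (e.1.length + e.2.length) := Nat.mul_le_mul_left i he'
      _ = i * e.1.length + i * e.2.length := Nat.mul_add i _ _
  have hwbig : i ≤ w.length := by
    rw [hwlen]; exact le_trans hii (Nat.le_add_right _ _)
  have hclenf : clen f = f.1.length + f.2.length := rfl
  have hclenf' : clen f' = f'.1.length + f'.2.length := rfl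
  set s := max f.1.length f'.1.length with hs
  set Lt := max f.2.length f'.2.length with hLt
  set L := w.length - s - Lt with hL
  have hbig : s + Lt + 2 * (x.length + x'.length) + 1 ≤ w.length := by omega
  obtain ⟨hperX, δ, hδ, hocc⟩ :=
    main_aux w f x k hk2 s L hxlen (le_max_left _ _) (by omega) (by omega)
  obtain ⟨hperX', δ', hδ', hocc'⟩ :=
    main_aux w f' x' k' hk2' s L hx'len (le_max_right _ _) (by omega) (by omega)
  set v := (w.drop s).take L with hvdef
  have hvlen : v.length = L := by
    rw [hvdef, List.length_take, List.length_drop]; omega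
  set g := Nat.gcd x.length x'.length with hg
  have hgper : PerP v g :=
    fw (x.length + x'.length) x.length x'.length v (le_refl _) hperX hperX' (by omega)
  have hd1 : g ∣ x.length := Nat.gcd_dvd_left _ _
  have hd2 : g ∣ x'.length := Nat.gcd_dvd_right _ _
  have hgpos : 0 < g := Nat.gcd_pos_of_pos_left _ hxlen
  have hgleX : g ≤ x.length := Nat.le_of_dvd hxlen hd1
  have hgleX' : g ≤ x'.length := Nat.le_of_dvd hx'len hd2
  have hperxg : PerP x g := by
    intro t ht
    rw [hocc t (by omega), hocc (t + g) (by omega),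
      show δ + (t + g) = (δ + t) + g from by omega]
    exact hgper (δ + t) (by rw [hvlen]; omega)
  have hperx'g : PerP x' g := by
    intro t ht
    rw [hocc' t (by omega), hocc' (t + g) (by omega),
      show δ' + (t + g) = (δ' + t) + g from by omega]
    exact hgper (δ' + t) (by rw [hvlen]; omega)
  have hxg : x.length = g := by
    have hq : x.length = (x.length / g) * g := (Nat.div_mul_cancel hd1).symm
    have h1 := eq_wpow_of_perp g hgpos (x.length / g) x hq hperxg
    have h2 : 1 ≤ x.length / g := (Nat.one_le_div_iff hgpos).mpr hgleX
    have h3 := hx.2 _ _ h2 h1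
    rw [hq, h3, one_mul]
  have hx'g : x'.length = g := by
    have hq : x'.length = (x'.length / g) * g := (Nat.div_mul_cancel hd2).symm
    have h1 := eq_wpow_of_perp g hgpos (x'.length / g) x' hq hperx'g
    have h2 : 1 ≤ x'.length / g := (Nat.one_le_div_iff hgpos).mpr hgleX'
    have h3 := hx'.2 _ _ h2 h1
    rw [hq, h3, one_mul]
  rw [hxg] at hδ hocc
  rw [hx'g] at hδ' hocc'
  rcases le_total δ δ' with hle | hle
  · exact conj_aux v x x' g hxg hx'g hgper δ δ' hle hδ' hocc hocc'
  · obtain ⟨t1, t2, h1, h2⟩ := conj_aux v x' x g hx'g hxg hgper δ' δ hle hδ hocc' hocc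
    exact ⟨t2, t1, h2, h1⟩
end
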